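/- arXiv:2502.16155 — 2 statements merged into one kernel-verified Lean document; each statement's English description precedes it below -/
import Mathlib

section
/- Let L be a principally generated C-lattice that is a lattice domain, and let a, y, z ∈ L be nonzero with y, z principal and y ≤ a. Then z·(y : a) = (z·y : a). -/
/-- A multiplicative lattice: a complete lattice (bottom `⊥` playing the role of `0`)
which is a commutative monoid whose identity `1` is the top element, and in which
multiplication distributes over arbitrary joins. -/
class MulLattice (L : Type*) extends CompleteLattice L, CommMonoid L where
  one_eq_top : (1 : L) = ⊤
  mul_sSup : ∀ (a : L) (S : Set L), a * sSup S = ⨆ b ∈ S, a * b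

namespace MulLattice

variable {L : Type*} [MulLattice L]

/-- The residual `(y : x) = ⋁ {a | a * x ≤ y}`. -/
def res (y x : L) : L := sSup {a : L | a * x ≤ y}

/-- `x` is meet-principal: `y ⊓ z * x = ((y : x) ⊓ z) * x` for all `y, z`. -/
def IsMeetPrincipal (x : L) : Prop := ∀ y z : L, y ⊓ z * x = (res y x ⊓ z) * x

/-- `x` is join-principal: `y ⊔ (z : x) = ((y * x ⊔ z) : x)` for all `y, z`. -/
def IsJoinPrincipal (x : L) : Prop := ∀ y z : L, y ⊔ res z x = res (y * x ⊔ z) x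

/-- `x` is principal if it is both meet-principal and join-principal. -/
def IsPrincipal (x : L) : Prop := IsMeetPrincipal x ∧ IsJoinPrincipal x

/-- A prime element: a proper element `p` with `x * y ≤ p → x ≤ p ∨ y ≤ p`. -/
def IsPrime (p : L) : Prop := p ≠ 1 ∧ ∀ x y : L, x * y ≤ p → x ≤ p ∨ y ≤ p

/-- A maximal element: an element maximal in `L - {1}`. -/
def IsMaximal (m : L) : Prop := m ≠ 1 ∧ ∀ b : L, m < b → b = 1

end MulLattice

/-- A principally generated C-lattice: a multiplicative lattice in which `1` is compact,
compact elements are closed under multiplication, every element is a join of compact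
elements and every element is a join of principal elements. -/
class PGCLattice (L : Type*) extends MulLattice L where
  top_isCompact : IsCompactElement (⊤ : L)
  compact_mul : ∀ a b : L, IsCompactElement a →
    IsCompactElement b → IsCompactElement (a * b)
  compactly_generated : ∀ a : L,
    a = sSup {c : L | IsCompactElement c ∧ c ≤ a}
  principally_generated : ∀ a : L,
    a = sSup {x : L | MulLattice.IsPrincipal x ∧ x ≤ a}

namespace MulLattice

variable {L : Type*}

/-- A lattice domain: `0 = ⊥` is a prime element. -/
def IsLatticeDomain (L : Type*) [MulLattice L] : Prop := IsPrime (⊥ : L)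

variable [PGCLattice L]

open Classical in
/-- The divisorial (`v`-)closure of `a`: equals `(x : (x : a))` for a nonzero principal
`x ≤ a` when such an `x` exists (in a lattice domain this is independent of the choice
of `x`), and `⊥` otherwise (in particular `vclos ⊥ = ⊥`). -/
noncomputable def vclos (a : L) : L :=
  if h : ∃ x : L, IsPrincipal x ∧ x ≠ ⊥ ∧ x ≤ a then
    res h.choose (res h.choose a)
  else ⊥

/-- `a` is divisorial if `a = a_v`. -/
def IsDivisorial (a : L) : Prop := vclos a = a

/-- `L` is h-local: every nonzero prime is below a unique maximal element and
every nonzero element is below only finitely many maximal elements. -/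
def IsHLocal (L : Type*) [PGCLattice L] : Prop :=
  (∀ r : L, r ≠ ⊥ → IsPrime r → ∃! m : L, IsMaximal m ∧ r ≤ m) ∧
  (∀ b : L, b ≠ ⊥ → {m : L | IsMaximal m ∧ b ≤ m}.Finite)

end MulLattice

open MulLattice

section Aux
variable {L : Type*} [MulLattice L]

lemma aux_mul_le_mul (a : L) {b c : L} (h : b ≤ c) : a * b ≤ a * c := by
  have hs : sSup ({b, c} : Set L) = c := by rw [sSup_pair, sup_eq_right.mpr h]
  have h2 := MulLattice.mul_sSup a {b, c}
  rw [hs] at h2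
  rw [h2]
  exact le_biSup _ (by simp)

lemma aux_res_mul_le (y x : L) : res y x * x ≤ y := by
  rw [res, mul_comm, MulLattice.mul_sSup]
  exact iSup₂_le fun b hb => by rw [mul_comm]; exact hb

lemma aux_le_res {u x y : L} (h : u * x ≤ y) : u ≤ res y x := le_sSup h

lemma aux_res_mono {y y' : L} (x : L) (h : y ≤ y') : res y x ≤ res y' x :=
  sSup_le_sSup fun a ha => le_trans ha h

lemma aux_res_bot (hL : IsLatticeDomain L) {x : L} (hx : x ≠ ⊥) :
    res (⊥ : L) x = ⊥ := by
  rw [res, ← le_bot_iff]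
  refine sSup_le fun a ha => ?_
  rcases hL.2 a x ha with h | h
  · exact h
  · exact absurd (le_bot_iff.mp h) hx

lemma aux_cancel (hL : IsLatticeDomain L) {x : L} (hx : x ≠ ⊥)
    (hp : IsJoinPrincipal x) {u v : L} (h : u * x ≤ v * x) : u ≤ v := by
  have h1 : u ⊔ res ⊥ x = res (u * x ⊔ ⊥) x := hp u ⊥
  have h2 : v ⊔ res ⊥ x = res (v * x ⊔ ⊥) x := hp v ⊥
  rw [aux_res_bot hL hx, sup_bot_eq, sup_bot_eq] at h1 h2
  rw [h1, h2]
  exact aux_res_mono x h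

end Aux

theorem stmt0 {L : Type*} [PGCLattice L] (hL : IsLatticeDomain L)
    (a y z : L) (ha : a ≠ ⊥) (hy0 : y ≠ ⊥) (hz0 : z ≠ ⊥)
    (hy : IsPrincipal y) (hz : IsPrincipal z) (hya : y ≤ a) :
    z * res y a = res (z * y) a := by
  apply le_antisymm
  · apply aux_le_res
    calc z * res y a * a = z * (res y a * a) := mul_assoc _ _ _
      _ ≤ z * y := aux_mul_le_mul z (aux_res_mul_le y a)
  · refine sSup_le fun d hd => ?_
    -- hd : d * a ≤ z * y
    have hdz : d ≤ z := by
      apply aux_cancel hL hy0 hy.2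
      calc d * y ≤ d * a := aux_mul_le_mul d hya
        _ ≤ z * y := hd
        _ = z * y := rfl
    -- meet-principal of z with y' = d, z' = 1
    have hmp := hz.1 d 1
    rw [one_mul, inf_eq_left.mpr hdz, MulLattice.one_eq_top, inf_top_eq] at hmp
    -- hmp : d = res d z * z
    set e := res d z with he
    have hea : e * a ≤ y := by
      apply aux_cancel hL hz0 hz.2
      calc e * a * z = e * z * a := mul_right_comm e a z
        _ = d * a := by rw [← hmp]
        _ ≤ z * y := hd
        _ = y * z := mul_comm z y
    have : e ≤ res y a := aux_le_res hea
    calc d = e * z := hmp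
      _ ≤ res y a * z := by
          rw [mul_comm e z, mul_comm (res y a) z]
          exact aux_mul_le_mul z this
      _ = z * res y a := mul_comm _ _
end

section
/- Let L be a divisorial principally generated C-lattice lattice domain. Then for every nonzero a ∈ L, the set of maximal elements of L that are above a is finite. -/
open MulLattice

section Aux

variable {L : Type*} [PGCLattice L]

lemma ml_mul_sup (a b c : L) : a * (b ⊔ c) = a * b ⊔ a * c := by
  have h := MulLattice.mul_sSup a {b, c}
  rw [sSup_pair] at h
  rw [h]
  simp [iSup_or, iSup_sup_eq]

lemma ml_mul_le_mul_left {b c : L} (h : b ≤ c) (a : L) : a * b ≤ a * c := by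
  have hh : a * c = a * b ⊔ a * c := by rw [← ml_mul_sup, sup_eq_right.mpr h]
  rw [hh]; exact le_sup_left

lemma ml_mul_le_mul_right {b c : L} (h : b ≤ c) (a : L) : b * a ≤ c * a := by
  rw [mul_comm b a, mul_comm c a]; exact ml_mul_le_mul_left h a

lemma ml_mul_le_right (a b : L) : a * b ≤ b := by
  calc a * b ≤ (1 : L) * b := by
        apply ml_mul_le_mul_right
        rw [MulLattice.one_eq_top]; exact le_top
  _ = b := one_mul b

lemma ml_mul_iSup {ι : Sort*} (a : L) (f : ι → L) : a * (⨆ i, f i) = ⨆ i, a * f i := by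
  rw [iSup, MulLattice.mul_sSup, iSup_range]

lemma res_mul_le (u v : L) : res u v * v ≤ u := by
  rw [res, mul_comm, MulLattice.mul_sSup]
  apply iSup_le; intro b; apply iSup_le; intro hb
  rw [mul_comm]; exact hb

lemma le_res_iff {t u v : L} : t ≤ res u v ↔ t * v ≤ u := by
  constructor
  · intro h
    calc t * v ≤ res u v * v := ml_mul_le_mul_right h v
    _ ≤ u := res_mul_le u v
  · intro h; exact le_sSup h

lemma res_anti {u v v' : L} (h : v ≤ v') : res u v' ≤ res u v := by
  apply sSup_le; intro t ht
  exact le_sSup (le_trans (ml_mul_le_mul_left h t) ht)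

lemma res_mono_left {u u' : L} (h : u ≤ u') (v : L) : res u v ≤ res u' v := by
  apply sSup_le; intro t ht
  exact le_sSup (le_trans ht h)

lemma res_self (u : L) : res u u = ⊤ := by
  apply top_unique
  apply le_res_iff.mpr
  rw [← MulLattice.one_eq_top, one_mul]

lemma res_bot (hL : IsLatticeDomain L) {p : L} (hp0 : p ≠ ⊥) : res (⊥ : L) p = ⊥ := by
  apply le_bot_iff.mp
  apply sSup_le
  intro t ht
  rcases hL.2 t p ht with h | h
  · exact h
  · exact absurd (le_bot_iff.mp h) hp0

lemma res_mul_cancel (hL : IsLatticeDomain L) {p : L} (hp : IsPrincipal p) (hp0 : p ≠ ⊥)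
    (z : L) : res (z * p) p = z := by
  have h := hp.2 z ⊥
  rw [res_bot hL hp0, sup_bot_eq, sup_bot_eq] at h
  exact h.symm

lemma eq_res_mul_of_le {p t : L} (hp : IsMeetPrincipal p) (ht : t ≤ p) :
    t = res t p * p := by
  have h := hp t 1
  rw [one_mul, inf_eq_left.mpr ht, MulLattice.one_eq_top, inf_top_eq] at h
  exact h

lemma res_res_mul (u v w : L) : res u (v * w) = res (res u w) v := by
  apply le_antisymm
  · rw [le_res_iff, le_res_iff, mul_assoc]
    exact res_mul_le _ _
  · rw [le_res_iff]
    calc res (res u w) v * (v * w) = (res (res u w) v * v) * w := by rw [mul_assoc]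
    _ ≤ res u w * w := ml_mul_le_mul_right (res_mul_le _ _) w
    _ ≤ u := res_mul_le _ _

lemma res_mul_principal (hL : IsLatticeDomain L) {x c b : L}
    (hxp : IsPrincipal x) (hcp : IsPrincipal c) (hx0 : x ≠ ⊥) (hc0 : c ≠ ⊥)
    (hxb : x ≤ b) : res (x * c) b = res x b * c := by
  apply le_antisymm
  · have htc : res (x * c) b ≤ c := by
      have h1 : res (x * c) b ≤ res (x * c) x := res_anti hxb
      have h2 : res (x * c) x = c := by
        rw [mul_comm]; exact res_mul_cancel hL hxp hx0 c
      exact h1.trans (le_of_eq h2)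
    have heq := eq_res_mul_of_le hcp.1 htc
    set s := res (res (x * c) b) c with hs
    have hsb : s * b ≤ x := by
      have h2 : (s * b) * c ≤ x * c := by
        calc (s * b) * c = (s * c) * b := mul_right_comm s b c
        _ = res (x * c) b * b := by rw [← heq]
        _ ≤ x * c := res_mul_le _ _
      have h3 : s * b ≤ res (x * c) c := le_res_iff.mpr h2
      rwa [res_mul_cancel hL hcp hc0 x] at h3
    calc res (x * c) b = s * c := heq
    _ ≤ res x b * c := ml_mul_le_mul_right (le_res_iff.mpr hsb) c
  · rw [le_res_iff]
    calc (res x b * c) * b = (res x b * b) * c := mul_right_comm _ _ _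
    _ ≤ x * c := ml_mul_le_mul_right (res_mul_le _ _) c

lemma res_double_mul (hL : IsLatticeDomain L) {x c b : L}
    (hxp : IsPrincipal x) (hcp : IsPrincipal c) (hx0 : x ≠ ⊥) (hc0 : c ≠ ⊥)
    (hxb : x ≤ b) :
    res (x * c) (res (x * c) b) = res x (res x b) := by
  rw [res_mul_principal hL hxp hcp hx0 hc0 hxb, res_res_mul,
    res_mul_cancel hL hcp hc0 x]

lemma div_res (hL : IsLatticeDomain L) (hdiv : ∀ a : L, IsDivisorial a)
    {b x : L} (hxp : IsPrincipal x) (hx0 : x ≠ ⊥) (hxb : x ≤ b) :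
    res x (res x b) = b := by
  have hex : ∃ y : L, IsPrincipal y ∧ y ≠ ⊥ ∧ y ≤ b := ⟨x, hxp, hx0, hxb⟩
  have hv : vclos b = b := hdiv b
  rw [vclos, dif_pos hex] at hv
  obtain ⟨hcp, hc0, hcb⟩ := hex.choose_spec
  calc res x (res x b)
      = res (x * hex.choose) (res (x * hex.choose) b) :=
        (res_double_mul hL hxp hcp hx0 hc0 hxb).symm
    _ = res (hex.choose * x) (res (hex.choose * x) b) := by rw [mul_comm]
    _ = res hex.choose (res hex.choose b) := res_double_mul hL hcp hxp hc0 hx0 hcb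
    _ = b := hv

lemma principal_compact (hL : IsLatticeDomain L) {p : L} (hp : IsPrincipal p) (hp0 : p ≠ ⊥)
    {S : Set L} (hpS : p ≤ sSup S) : ∃ T : Finset L, ↑T ⊆ S ∧ p ≤ T.sup id := by
  classical
  set g : {T : Finset L // ↑T ⊆ S} → L := fun T => res (T.1.sup id) p with hg
  have hstep : p ≤ ⨆ T, g T * p := by
    conv_lhs => rw [PGCLattice.compactly_generated p]
    apply sSup_le
    rintro c ⟨hc, hcp⟩
    obtain ⟨T, hTS, hcT⟩ :=
      (CompleteLattice.isCompactElement_iff_exists_le_sSup_of_le_sSup (k := c)).mp hc S (hcp.trans hpS)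
    refine le_iSup_of_le ⟨T, hTS⟩ ?_
    have h1 : c ≤ T.sup id ⊓ p := le_inf hcT hcp
    have h2 : T.sup id ⊓ p = g ⟨T, hTS⟩ * p := by
      have h3 := hp.1 (T.sup id) 1
      rw [one_mul, MulLattice.one_eq_top, inf_top_eq] at h3
      exact h3
    exact h1.trans (le_of_eq h2)
  have hmul : (⨆ T, g T * p) = (⨆ T, g T) * p := by
    rw [mul_comm, ml_mul_iSup]
    exact iSup_congr fun T => mul_comm _ _
  have hpeq : (⨆ T, g T) * p = p :=
    le_antisymm (ml_mul_le_right _ _) (hstep.trans (le_of_eq hmul))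
  have htople : (⊤ : L) ≤ ⨆ T, g T := by
    have h1 : res ((⨆ T, g T) * p) p = ⨆ T, g T := res_mul_cancel hL hp hp0 _
    rw [hpeq] at h1
    rw [← h1, res_self]
  obtain ⟨t, ht⟩ :=
    (CompleteLattice.isCompactElement_iff_exists_le_iSup_of_le_iSup (⊤ : L)).mp PGCLattice.top_isCompact _ g htople
  set T0 : Finset L := t.sup (fun T => T.1) with hT0
  refine ⟨T0, ?_, ?_⟩
  · intro e he
    rcases Finset.mem_sup.mp he with ⟨T, _, heT⟩
    exact T.2 heT
  · have hbound : t.sup g ≤ res (T0.sup id) p := by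
      apply Finset.sup_le
      intro T hTt
      apply res_mono_left
      apply Finset.sup_mono
      exact Finset.le_sup (f := fun T : {T : Finset L // ↑T ⊆ S} => T.1) hTt
    have h2 := le_res_iff.mp (le_trans ht hbound)
    rwa [← MulLattice.one_eq_top, one_mul] at h2

lemma maximal_isPrime {m : L} (hm : IsMaximal m) : IsPrime m := by
  refine ⟨hm.1, fun s t hst => ?_⟩
  by_cases hs : s ≤ m
  · exact Or.inl hs
  · right
    have hlt : m < m ⊔ s := lt_of_le_of_ne le_sup_left
      (fun h => hs (le_sup_right.trans h.symm.le))
    have h1 : m ⊔ s = 1 := hm.2 _ hlt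
    calc t = t * (m ⊔ s) := by rw [h1, mul_one]
    _ = t * m ⊔ t * s := ml_mul_sup t m s
    _ ≤ m := by
        apply sup_le
        · exact ml_mul_le_right t m
        · rw [mul_comm]; exact hst

lemma exists_le_maximal (b : L) (hb : b ≠ (1 : L)) : ∃ m : L, IsMaximal m ∧ b ≤ m := by
  have hco : IsCoatomic L := CompleteLattice.coatomic_of_top_compact PGCLattice.top_isCompact
  rcases hco.eq_top_or_exists_le_coatom b with h | ⟨m, hm, hbm⟩
  · exact absurd (by rw [MulLattice.one_eq_top]; exact h) hb
  · refine ⟨m, ⟨?_, ?_⟩, hbm⟩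
    · rw [MulLattice.one_eq_top]; exact hm.1
    · intro c hc; rw [MulLattice.one_eq_top]; exact hm.2 c hc

lemma prime_finset_prod {k : L} (hk : IsPrime k) {ι : Type*} (T : Finset ι) (f : ι → L)
    (h : T.prod f ≤ k) : ∃ e ∈ T, f e ≤ k := by
  classical
  induction T using Finset.induction_on with
  | empty =>
      exfalso
      rw [Finset.prod_empty] at h
      exact hk.1 (le_antisymm (by rw [MulLattice.one_eq_top]; exact le_top) h)
  | @insert e' T' ha ih =>
      rw [Finset.prod_insert ha] at h
      rcases hk.2 _ _ h with h1 | h1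
      · exact ⟨e', Finset.mem_insert_self _ _, h1⟩
      · obtain ⟨e, he, hfe⟩ := ih h1
        exact ⟨e, Finset.mem_insert_of_mem he, hfe⟩

lemma finset_prod_le {ι : Type*} (T : Finset ι) (f : ι → L) {e : ι} (he : e ∈ T) :
    T.prod f ≤ f e := by
  classical
  rw [← Finset.mul_prod_erase T f he]
  calc f e * (T.erase e).prod f = (T.erase e).prod f * f e := mul_comm _ _
  _ ≤ f e := ml_mul_le_right _ _

end Aux

theorem stmt15 {L : Type*} [PGCLattice L] (hL : IsLatticeDomain L)
    (hdiv : ∀ a : L, IsDivisorial a)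
    (a : L) (ha : a ≠ ⊥) :
    {m : L | IsMaximal m ∧ a ≤ m}.Finite := by
  classical
  -- find a nonzero principal element below `a`
  have hex : ∃ x : L, IsPrincipal x ∧ x ≠ ⊥ ∧ x ≤ a := by
    by_contra hc
    refine ha (le_bot_iff.mp ?_)
    conv_lhs => rw [PGCLattice.principally_generated a]
    apply sSup_le
    rintro p ⟨hp1, hp2⟩
    by_contra hpb
    exact hc ⟨p, hp1, fun h => hpb (le_of_eq h), hp2⟩
  obtain ⟨x, hxp, hx0, hxa⟩ := hex
  set I : Set L := {m : L | IsMaximal m ∧ x ≤ m} with hIdef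
  have hsub : {m : L | IsMaximal m ∧ a ≤ m} ⊆ I := fun m hm => ⟨hm.1, hxa.trans hm.2⟩
  suffices hfin : I.Finite from hfin.subset hsub
  by_contra hinf'
  have hinf : I.Infinite := hinf'
  -- divisoriality with base point x
  have hdd : ∀ b : L, x ≤ b → res x (res x b) = b := by
    intro b hb
    exact div_res hL hdiv hxp hx0 hb
  -- choice of nonzero principal elements y_m ≤ (x : m) with y_m ≰ x
  have hYex : ∀ m ∈ I, ∃ y : L, IsPrincipal y ∧ ¬y ≤ x ∧ y ≤ res x m := by
    intro m hm
    have hBx : ¬res x m ≤ x := by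
      intro hle
      have h1 : res x x ≤ res x (res x m) := res_anti hle
      rw [res_self, hdd m hm.2] at h1
      exact hm.1.1 (le_antisymm (by rw [MulLattice.one_eq_top]; exact le_top)
        (by rw [MulLattice.one_eq_top]; exact h1))
    by_contra hc
    push_neg at hc
    apply hBx
    conv_lhs => rw [PGCLattice.principally_generated (res x m)]
    apply sSup_le
    rintro p ⟨hp1, hp2⟩
    by_contra hpx
    exact hc p hp1 hpx hp2
  choose! Y hYp hYx hYr using hYex
  have hYres : ∀ m ∈ I, res x (Y m) = m := by
    intro m hm
    have h1 : m ≤ res x (Y m) := by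
      apply le_res_iff.mpr
      rw [mul_comm]
      exact le_res_iff.mp (hYr m hm)
    have h2 : res x (Y m) ≠ 1 := by
      intro h
      apply hYx m hm
      have h3 : (1 : L) ≤ res x (Y m) := h.ge
      rw [le_res_iff, one_mul] at h3
      exact h3
    rcases lt_or_eq_of_le h1 with hlt | heq
    · exact absurd (hm.1.2 _ hlt) h2
    · exact heq.symm
  -- the element R
  set F : L → L := fun m => sInf (I \ {m}) with hF
  set R : L := sSup (F '' I) with hR
  have hRne : R ≠ (1 : L) := by
    intro hR1
    have hle : (⊤ : L) ≤ sSup (F '' I) := by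
      rw [← hR, hR1, MulLattice.one_eq_top]
    obtain ⟨G, hGsub, hGle⟩ :=
      (CompleteLattice.isCompactElement_iff_exists_le_sSup_of_le_sSup (k := (⊤ : L))).mp
        PGCLattice.top_isCompact _ hle
    have hw : ∀ e ∈ G, ∃ m, m ∈ I ∧ F m = e := by
      intro e he
      rcases (Set.mem_image _ _ _).mp (hGsub he) with ⟨m, hm, hme⟩
      exact ⟨m, hm, hme⟩
    choose! w hwI hwF using hw
    obtain ⟨k, hkI, hkJ⟩ := (hinf.diff (G.image w).finite_toSet).nonempty
    have hGk : G.sup id ≤ k := by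
      apply Finset.sup_le
      intro e he
      have hFk : F (w e) ≤ k := by
        apply sInf_le
        refine ⟨hkI, ?_⟩
        intro hkw
        rw [Set.mem_singleton_iff] at hkw
        exact hkJ (Finset.mem_coe.mpr (Finset.mem_image.mpr ⟨e, he, hkw.symm⟩))
      rw [hwF e he] at hFk
      exact hFk
    have htk : (⊤ : L) ≤ k := hGle.trans hGk
    exact hkI.1.1 (le_antisymm (by rw [MulLattice.one_eq_top]; exact le_top)
      (by rw [MulLattice.one_eq_top]; exact htk))
  obtain ⟨m0, hm0⟩ := hinf.nonempty
  have hxR : x ≤ R := by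
    have h1 : x ≤ F m0 := le_sInf fun m' hm' => hm'.1.2
    exact h1.trans (le_sSup (Set.mem_image_of_mem F hm0))
  obtain ⟨k, hk, hRk⟩ := exists_le_maximal R hRne
  have hkI : k ∈ I := ⟨hk, hxR.trans hRk⟩
  have hFkk : F k ≤ k := (le_sSup (Set.mem_image_of_mem F hkI)).trans hRk
  -- y_k lies below (x : F k)
  have hyV : Y k ≤ res x (F k) := by
    apply le_res_iff.mpr
    calc Y k * F k ≤ Y k * k := ml_mul_le_mul_left hFkk (Y k)
    _ ≤ x := le_res_iff.mp (hYr k hkI)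
  -- identify (x : F k) with the join W
  set W : L := sSup (insert x (Y '' (I \ {k}))) with hW
  have hresW : res x W = F k := by
    apply le_antisymm
    · apply le_sInf
      intro m hm
      have hYm : Y m ≤ W := le_sSup (Set.mem_insert_of_mem _ ⟨m, hm, rfl⟩)
      have h1 : res x W ≤ res x (Y m) := res_anti hYm
      rwa [hYres m hm.1] at h1
    · rw [le_res_iff, MulLattice.mul_sSup]
      apply iSup_le; intro b; apply iSup_le; intro hb
      rcases hb with rfl | ⟨m, hm, rfl⟩
      · exact ml_mul_le_right _ _
      · calc F k * Y m ≤ m * Y m := ml_mul_le_mul_right (sInf_le hm) _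
        _ = Y m * m := mul_comm _ _
        _ ≤ x := le_res_iff.mp (hYr m hm.1)
  have hWx : x ≤ W := le_sSup (Set.mem_insert _ _)
  have hWeq : W = res x (F k) := by
    rw [← hresW]
    exact (hdd W hWx).symm
  have hyW : Y k ≤ sSup (insert x (Y '' (I \ {k}))) := by
    rw [← hW, hWeq]; exact hyV
  -- compactness of the principal element Y k
  have hYk0 : Y k ≠ ⊥ := fun h => hYx k hkI (h ▸ bot_le)
  obtain ⟨T, hTsub, hTle⟩ := principal_compact hL (hYp k hkI) hYk0 hyW
  -- the product of the residuals is below k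
  have hPk : T.prod (fun e => res x e) ≤ k := by
    have h1 : T.prod (fun e => res x e) ≤ res x (T.sup id) := by
      apply le_res_iff.mpr
      rw [Finset.sup_id_eq_sSup, MulLattice.mul_sSup]
      apply iSup_le; intro b; apply iSup_le; intro hb
      calc T.prod (fun e => res x e) * b ≤ res x b * b :=
            ml_mul_le_mul_right (finset_prod_le T _ hb) b
      _ ≤ x := res_mul_le x b
    have h2 : res x (T.sup id) ≤ res x (Y k) := res_anti hTle
    rw [hYres k hkI] at h2
    exact h1.trans h2
  obtain ⟨e, heT, hek⟩ := prime_finset_prod (maximal_isPrime hk) T _ hPk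
  rcases hTsub heT with rfl | ⟨m, hm, rfl⟩
  · rw [res_self] at hek
    exact hk.1 (le_antisymm (by rw [MulLattice.one_eq_top]; exact le_top)
      (by rw [MulLattice.one_eq_top]; exact hek))
  · rw [hYres m hm.1] at hek
    have hmk : m = k := by
      rcases lt_or_eq_of_le hek with h | h
      · exact absurd (hm.1.1.2 _ h) hk.1
      · exact h
    exact hm.2 (Set.mem_singleton_iff.mpr hmk)
end
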